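/- The mean of the photon-number distribution of the photon-added thermal state ρ(0,k) equals k·(n_t+1) + n_t; i.e., Σ_{n=k}^{∞} n·C(n,k)·n_t^(n−k)/(n_t+1)^(n+1) = k·(n_t+1) + n_t. -/

import Mathlib

/-- The mean photon number of the photon-added thermal state `ρ(0,k)` equals
`k(n_t+1) + n_t`. (Terms with `n < k` vanish since `C(n,k) = 0`.) -/
theorem photon_added_thermal_mean (k : ℕ) (nt : ℝ) (hnt : 0 < nt) :
    ∑' n : ℕ, (n : ℝ) * (n.choose k) * nt ^ (n - k) / (nt + 1) ^ (n + 1)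
      = k * (nt + 1) + nt := by
  set f : ℕ → ℝ := fun n => (n : ℝ) * (n.choose k) * nt ^ (n - k) / (nt + 1) ^ (n + 1) with hf
  have hnt1 : (0:ℝ) < nt + 1 := by linarith
  set x : ℝ := nt / (nt + 1) with hxdef
  have hx : ‖x‖ < 1 := by
    rw [Real.norm_eq_abs, abs_of_pos (div_pos hnt hnt1)]
    rw [div_lt_one hnt1]; linarith
  have h1mx : 1 - x = (nt + 1)⁻¹ := by
    rw [hxdef]
    field_simp
    ring
  have h1 := hasSum_choose_mul_geometric_of_norm_lt_one (𝕜 := ℝ) k hx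
  have h2 := hasSum_choose_mul_geometric_of_norm_lt_one (𝕜 := ℝ) (k+1) hx
  -- shift h2 to get sum of C(m+k, k+1) x^m
  have h2' : HasSum (fun m : ℕ => (((m + k).choose (k+1) : ℝ)) * x ^ m)
      (x * (1 / (1 - x) ^ (k + 2))) := by
    have h3 : HasSum (fun m : ℕ => (((m + (k+1)).choose (k+1) : ℝ)) * x ^ (m+1))
        (x * (1 / (1 - x) ^ (k + 2))) := by
      have := h2.mul_left x
      convert this using 2 with m
      · rfl
      rw [pow_succ]; ring
    have := (hasSum_nat_add_iff (f := fun m : ℕ => (((m + k).choose (k+1) : ℝ)) * x ^ m) 1).mp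
      (by
        have he : ∀ m : ℕ, m + 1 + k = m + (k+1) := fun m => by omega
        convert h3 using 2 with m
        · rfl
        rw [he m])
    simpa using this
  -- combine
  have hcomb : HasSum (fun m : ℕ => ((m + k : ℕ) : ℝ) * ((m + k).choose k : ℝ) * x ^ m)
      ((k : ℝ) * (1 / (1 - x) ^ (k + 1)) + ((k:ℝ)+1) * (x * (1 / (1 - x) ^ (k + 2)))) := by
    have := (h1.mul_left (k : ℝ)).add (h2'.mul_left ((k:ℝ)+1))
    convert this using 2 with m
    · rfl
    have key : ((m + k).choose (k+1) : ℝ) * ((k:ℝ)+1) = ((m + k).choose k : ℝ) * m := by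
      have := Nat.choose_succ_right_eq (m + k) k
      have h4 : m + k - k = m := by omega
      rw [h4] at this
      exact_mod_cast congrArg (Nat.cast : ℕ → ℝ) this
    push_cast
    linear_combination (-(x ^ m)) * key
  -- multiply by constant and rewrite as f (m + k)
  have hshift : HasSum (fun m : ℕ => f (m + k))
      (((k : ℝ) * (1 / (1 - x) ^ (k + 1)) + ((k:ℝ)+1) * (x * (1 / (1 - x) ^ (k + 2))))
        * ((nt + 1) ^ (k+1))⁻¹) := by
    have := hcomb.mul_right ((nt + 1) ^ (k+1))⁻¹
    convert this using 2 with m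
    · rfl
    simp only [hf]
    have h4 : m + k - k = m := by omega
    rw [h4]
    have hpow : (nt + 1) ^ (m + k + 1) = (nt + 1) ^ m * (nt + 1) ^ (k+1) := by
      rw [show m + k + 1 = m + (k+1) from by omega, pow_add]
    rw [hpow, hxdef, div_pow]
    have hne : (nt + 1) ≠ 0 := ne_of_gt hnt1
    push_cast
    field_simp
  have hS : (((k : ℝ) * (1 / (1 - x) ^ (k + 1)) + ((k:ℝ)+1) * (x * (1 / (1 - x) ^ (k + 2))))
        * ((nt + 1) ^ (k+1))⁻¹) = k * (nt + 1) + nt := by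
    rw [h1mx, hxdef]
    have hne : (nt + 1) ≠ 0 := ne_of_gt hnt1
    rw [inv_pow]
    simp only [one_div, inv_pow, inv_inv]
    field_simp
    ring
  rw [hS] at hshift
  have hfull : HasSum f (k * (nt + 1) + nt) := by
    have := (hasSum_nat_add_iff' (f := f) (g := (k : ℝ) * (nt + 1) + nt) k).mp ?_
    · exact this
    · have hzero : ∑ i ∈ Finset.range k, f i = 0 := by
        apply Finset.sum_eq_zero
        intro i hi
        simp only [hf]
        rw [Nat.choose_eq_zero_of_lt (Finset.mem_range.mp hi)]
        simp
      rw [hzero, sub_zero]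
      exact hshift
  exact hfull.tsum_eq
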